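/- For all positive integers m and n, the 2-rigid permutations in I₂ having exactly m elements of rank 2 and exactly n elements of rank 1 are in one-to-one correspondence with the subdirect products of the chains [m] and [n]; the bijection sends π to the lattice L_π of occurrences of the pattern 21 in π. -/

import Mathlib

/-- `f` is an embedding (involvement) of the permutation `α` into the permutation `π`:
it is strictly monotone on positions and preserves the relative order of values. -/
def IsEmbedding {m n : ℕ} (α : Equiv.Perm (Fin m)) (π : Equiv.Perm (Fin n))
    (f : Fin m → Fin n) : Prop :=
  StrictMono f ∧ ∀ a b : Fin m, α a < α b ↔ π (f a) < π (f b)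

/-- `π` contains a decreasing subsequence of length `k`. -/
def HasDecSeq {n : ℕ} (π : Equiv.Perm (Fin n)) (k : ℕ) : Prop :=
  ∃ q : Fin k → Fin n, StrictMono q ∧ StrictAnti fun i => π (q i)

/-- `π` is `k`-rigid: every element belongs to a subset whose pattern is `δ_k`. -/
def KRigid {n : ℕ} (k : ℕ) (π : Equiv.Perm (Fin n)) : Prop :=
  ∀ p : Fin n, ∃ q : Fin k → Fin n, StrictMono q ∧
    (StrictAnti fun i => π (q i)) ∧ ∃ i, q i = p

/-- For `π ∈ I₂`, the element at position `p` has rank 2, i.e. it occurs as the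
larger element of some `21` pattern. -/
def Rank2At {n : ℕ} (π : Equiv.Perm (Fin n)) (p : Fin n) : Prop :=
  ∃ q : Fin n, p < q ∧ π q < π p

/-- A sublattice of `Fin m × Fin n` is a subdirect product of the chains `[m]` and
`[n]` if both coordinate projections are surjective. -/
def IsSubdirect {m n : ℕ} (K : Sublattice (Fin m × Fin n)) : Prop :=
  (∀ a : Fin m, ∃ p : Fin n, (a, p) ∈ K) ∧ (∀ p : Fin n, ∃ a : Fin m, (a, p) ∈ K)

/-- `π` is a 2-rigid `321`-avoiding permutation with exactly `m` elements of rank 2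
and exactly `n` elements of rank 1. -/
def RigidWithRanks (m n : ℕ) (π : Σ N : ℕ, Equiv.Perm (Fin N)) : Prop :=
  (¬ HasDecSeq π.2 3) ∧ KRigid 2 π.2 ∧
    Nat.card {p : Fin π.1 // Rank2At π.2 p} = m ∧
    Nat.card {p : Fin π.1 // ¬ Rank2At π.2 p} = n

/-- `K = L_π`: listing the rank-2 elements of `π` as `r2 0, …, r2 (m-1)` in
increasing order of value and the rank-1 elements as `r1 0, …, r1 (n-1)` in
increasing order of value, `(i, j) ∈ K` if and only if the `i`-th rank-2 element
and the `j`-th rank-1 element of `π` form a `21` pattern. -/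
def IsOccurrenceLattice (m n : ℕ) (π : Σ N : ℕ, Equiv.Perm (Fin N))
    (K : Sublattice (Fin m × Fin n)) : Prop :=
  ∃ (r2 : Fin m → Fin π.1) (r1 : Fin n → Fin π.1),
    (StrictMono fun i => π.2 (r2 i)) ∧ (StrictMono fun j => π.2 (r1 j)) ∧
    (∀ p, Rank2At π.2 p ↔ ∃ i, r2 i = p) ∧
    (∀ p, ¬ Rank2At π.2 p ↔ ∃ j, r1 j = p) ∧
    (∀ i j, (i, j) ∈ K ↔ (r2 i < r1 j ∧ π.2 (r1 j) < π.2 (r2 i)))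
namespace TwoRigidAux


lemma sm2 {α : Type*} [Preorder α] {f : Fin 2 → α} (h : f 0 < f 1) : StrictMono f := by
  intro i j hij
  fin_cases i <;> fin_cases j <;> simp_all

lemma sa2 {α : Type*} [Preorder α] {f : Fin 2 → α} (h : f 1 < f 0) : StrictAnti f := by
  intro i j hij
  fin_cases i <;> fin_cases j <;> simp_all

lemma dec3 {N : ℕ} {π : Equiv.Perm (Fin N)} {a b c : Fin N} (hab : a < b) (hbc : b < c)
    (h1 : π b < π a) (h2 : π c < π b) : HasDecSeq π 3 := by
  refine ⟨![a, b, c], ?_, ?_⟩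
  · intro i j hij
    fin_cases i <;> fin_cases j <;> simp_all <;> exact hab.trans hbc
  · intro i j hij
    fin_cases i <;> fin_cases j <;> simp_all <;> exact h2.trans h1
open Finset Sum

variable {m n : ℕ}

/-- number of `i` with `c i ≤ j`. -/
def dcount (c : Fin m → ℕ) (j : ℕ) : ℕ := (Finset.univ.filter fun i => c i ≤ j).card

lemma dcount_le (c : Fin m → ℕ) (j : ℕ) : dcount c j ≤ m := by
  classical
  exact le_trans (Finset.card_filter_le _ _) (by simp)

lemma dcount_mono (c : Fin m → ℕ) : Monotone (dcount c) := by
  intro j j' h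
  exact Finset.card_le_card (fun i hi => by
    simp only [Finset.mem_filter] at *; exact ⟨hi.1, hi.2.trans h⟩)

/-- interleave `m` "upper" points and `n` "lower" points. -/
def riffle (c : Fin m → ℕ) (hcn : ∀ i, c i ≤ n) : Fin m ⊕ Fin n → Fin (m + n) :=
  Sum.elim (fun i => ⟨i + c i, by have := hcn i; have := i.isLt; omega⟩)
           (fun j => ⟨j + dcount c j, by have := dcount_le c j; have := j.isLt; omega⟩)

lemma lemA {c : Fin m → ℕ} (hc : Monotone c) {i : Fin m} {j : ℕ} (h : c i ≤ j) :
    (i : ℕ) + c i < j + dcount c j := by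
  have hsub : Finset.Iic i ⊆ Finset.univ.filter fun i' => c i' ≤ j := by
    intro i' hi'
    simp only [Finset.mem_Iic] at hi'
    simp only [Finset.mem_filter, Finset.mem_univ, true_and]
    exact le_trans (hc hi') h
  have := Finset.card_le_card hsub
  rw [Fin.card_Iic] at this
  have : (i : ℕ) + 1 ≤ dcount c j := this
  omega

lemma lemB {c : Fin m → ℕ} (hc : Monotone c) {i : Fin m} {j : ℕ} (h : j < c i) :
    j + dcount c j < (i : ℕ) + c i := by
  have hsub : (Finset.univ.filter fun i' => c i' ≤ j) ⊆ Finset.Iio i := by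
    intro i' hi'
    simp only [Finset.mem_filter, Finset.mem_univ, true_and] at hi'
    simp only [Finset.mem_Iio]
    by_contra hcon
    push_neg at hcon
    exact absurd (le_trans (hc hcon) hi') (not_le.2 h)
  have := Finset.card_le_card hsub
  rw [Fin.card_Iio] at this
  have : dcount c j ≤ (i : ℕ) := this
  omega

/-- abstract strict order describing the riffle. -/
def Rc (c : Fin m → ℕ) : Fin m ⊕ Fin n → Fin m ⊕ Fin n → Prop
  | Sum.inl i, Sum.inl i' => i < i'
  | Sum.inl i, Sum.inr j => c i ≤ (j : ℕ)
  | Sum.inr j, Sum.inl i => (j : ℕ) < c i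
  | Sum.inr j, Sum.inr j' => j < j'

lemma Rc_tri (c : Fin m → ℕ) (x y : Fin m ⊕ Fin n) : x = y ∨ Rc c x y ∨ Rc c y x := by
  rcases x with i | j <;> rcases y with i' | j'
  · rcases lt_trichotomy i i' with h|h|h
    · exact Or.inr (Or.inl h)
    · exact Or.inl (by rw [h])
    · exact Or.inr (Or.inr h)
  · rcases le_or_gt (c i) (j' : ℕ) with h|h
    · exact Or.inr (Or.inl h)
    · exact Or.inr (Or.inr h)
  · rcases le_or_gt (c i') (j : ℕ) with h|h
    · exact Or.inr (Or.inr h)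
    · exact Or.inr (Or.inl h)
  · rcases lt_trichotomy j j' with h|h|h
    · exact Or.inr (Or.inl h)
    · exact Or.inl (by rw [h])
    · exact Or.inr (Or.inr h)

lemma riffle_dir {c : Fin m → ℕ} (hc : Monotone c) (hcn : ∀ i, c i ≤ n)
    {x y : Fin m ⊕ Fin n} (h : Rc c x y) : riffle c hcn x < riffle c hcn y := by
  rcases x with i | j <;> rcases y with i' | j' <;>
    simp only [riffle, Sum.elim_inl, Sum.elim_inr, Fin.mk_lt_mk, Rc] at *
  · have := hc h.le
    have : (i : ℕ) < i' := h
    omega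
  · exact lemA hc h
  · exact lemB hc h
  · have := dcount_mono c (le_of_lt (show (j:ℕ) < j' from h))
    have : (j : ℕ) < j' := h
    omega

/-- generic: a map satisfying directional lemmas w.r.t. a trichotomous relation. -/
lemma lt_iff_of_dir {S : Type*} {N : ℕ} {f : S → Fin N} {R : S → S → Prop}
    (hdir : ∀ x y, R x y → f x < f y) (htri : ∀ x y, x = y ∨ R x y ∨ R y x) :
    ∀ x y, f x < f y ↔ R x y := by
  intro x y
  refine ⟨fun h => ?_, hdir x y⟩
  rcases htri x y with rfl | h' | h'
  · exact absurd h (lt_irrefl _)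
  · exact h'
  · exact absurd (hdir _ _ h') (not_lt.2 h.le)

lemma inj_of_dir {S : Type*} {N : ℕ} {f : S → Fin N} {R : S → S → Prop}
    (hdir : ∀ x y, R x y → f x < f y) (htri : ∀ x y, x = y ∨ R x y ∨ R y x) :
    Function.Injective f := by
  intro x y h
  rcases htri x y with rfl | h' | h'
  · rfl
  · exact absurd (hdir _ _ h') (by rw [h]; exact lt_irrefl _)
  · exact absurd (hdir _ _ h') (by rw [h]; exact lt_irrefl _)

lemma riffle_lt_iff {c : Fin m → ℕ} (hc : Monotone c) (hcn : ∀ i, c i ≤ n) (x y) :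
    riffle c hcn x < riffle c hcn y ↔ Rc c x y :=
  lt_iff_of_dir (fun _ _ h => riffle_dir hc hcn h) (Rc_tri c) x y

lemma riffle_bij {c : Fin m → ℕ} (hc : Monotone c) (hcn : ∀ i, c i ≤ n) :
    Function.Bijective (riffle c hcn) := by
  rw [Fintype.bijective_iff_injective_and_card]
  exact ⟨inj_of_dir (fun _ _ h => riffle_dir hc hcn h) (Rc_tri c), by simp⟩

/-- a strict mono self map of `Fin N` is the identity. -/
lemma strictMono_eq_id {N : ℕ} {φ : Fin N → Fin N} (h : StrictMono φ) : φ = id := by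
  have h1 : φ = ⇑(Finset.univ.orderEmbOfFin (by simp : (Finset.univ : Finset (Fin N)).card = N)) :=
    Finset.orderEmbOfFin_unique _ (fun x => Finset.mem_univ _) h
  have h2 : (id : Fin N → Fin N) = ⇑(Finset.univ.orderEmbOfFin (by simp : (Finset.univ : Finset (Fin N)).card = N)) :=
    Finset.orderEmbOfFin_unique _ (fun x => Finset.mem_univ _) strictMono_id
  rw [h1, h2]

lemma eq_of_orderCompat {S : Type*} {N : ℕ} {f g : S → Fin N}
    (hf : Function.Bijective f) (hg : Function.Bijective g)
    (h : ∀ x y, f x < f y ↔ g x < g y) : f = g := by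
  have key : ∀ u, f ((Equiv.ofBijective g hg).symm u) = u := by
    have hsm : StrictMono (fun u => f ((Equiv.ofBijective g hg).symm u)) := by
      intro u v huv
      apply (h _ _).2
      have : ∀ w, g ((Equiv.ofBijective g hg).symm w) = w := fun w =>
        (Equiv.ofBijective g hg).apply_symm_apply w
      rw [this, this]; exact huv
    have := strictMono_eq_id hsm
    intro u; exact congrFun this u
  funext x
  have : (Equiv.ofBijective g hg).symm (g x) = x := (Equiv.ofBijective g hg).symm_apply_apply x
  calc f x = f ((Equiv.ofBijective g hg).symm (g x)) := by rw [this]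
  _ = g x := key (g x)

section Rank
variable {N : ℕ} {π : Equiv.Perm (Fin N)}

lemma rank2_mono (hav : ¬ HasDecSeq π 3) {p p' : Fin N} (hp' : Rank2At π p')
    (hlt : p < p') : π p < π p' := by
  rcases lt_trichotomy (π p) (π p') with h|h|h
  · exact h
  · exact absurd (π.injective h) (ne_of_lt hlt)
  · obtain ⟨q, hq, hv⟩ := hp'
    exact absurd (dec3 hlt hq h hv) hav

lemma rank1_mono {p : Fin N} (hp : ¬ Rank2At π p) {p' : Fin N} (hlt : p < p') :
    π p < π p' := by
  rcases lt_trichotomy (π p) (π p') with h|h|h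
  · exact h
  · exact absurd (π.injective h) (ne_of_lt hlt)
  · exact absurd ⟨p', hlt, h⟩ hp

end Rank

lemma part1 {m n : ℕ} (π : Σ N : ℕ, Equiv.Perm (Fin N)) (hπ : RigidWithRanks m n π) :
    ∃! K : Sublattice (Fin m × Fin n), IsSubdirect K ∧ IsOccurrenceLattice m n π K := by
  classical
  obtain ⟨N, σ⟩ := π
  obtain ⟨hav, hrig, hc2, hc1⟩ := hπ
  simp only at hav hrig hc2 hc1
  set s2 : Finset (Fin N) := Finset.univ.filter (fun p => Rank2At σ p) with hs2def
  set s1 : Finset (Fin N) := Finset.univ.filter (fun p => ¬ Rank2At σ p) with hs1def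
  have hs2 : s2.card = m := by
    rw [← hc2, Nat.card_eq_fintype_card, Fintype.card_subtype]
  have hs1 : s1.card = n := by
    rw [← hc1, Nat.card_eq_fintype_card, Fintype.card_subtype]
  set r2 : Fin m → Fin N := ⇑(s2.orderEmbOfFin hs2) with hr2def
  set r1 : Fin n → Fin N := ⇑(s1.orderEmbOfFin hs1) with hr1def
  have hr2mem : ∀ i, Rank2At σ (r2 i) := by
    intro i
    have h := Finset.orderEmbOfFin_mem s2 hs2 i
    exact (Finset.mem_filter.1 h).2
  have hr1mem : ∀ j, ¬ Rank2At σ (r1 j) := by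
    intro j
    have h := Finset.orderEmbOfFin_mem s1 hs1 j
    exact (Finset.mem_filter.1 h).2
  have hr2sm : StrictMono r2 := (s2.orderEmbOfFin hs2).strictMono
  have hr1sm : StrictMono r1 := (s1.orderEmbOfFin hs1).strictMono
  have hr2v : StrictMono fun i => σ (r2 i) :=
    fun i i' h => rank2_mono hav (hr2mem i') (hr2sm h)
  have hr1v : StrictMono fun j => σ (r1 j) :=
    fun j j' h => rank1_mono (hr1mem j) (hr1sm h)
  have hr2range : ∀ p, Rank2At σ p ↔ ∃ i, r2 i = p := by
    intro p
    have h1 : Rank2At σ p ↔ p ∈ s2 := by simp [s2, Finset.mem_filter]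
    have h2 : p ∈ s2 ↔ p ∈ Set.range r2 := by
      rw [hr2def, Finset.range_orderEmbOfFin]; simp
    rw [h1, h2]; exact Iff.rfl
  have hr1range : ∀ p, ¬ Rank2At σ p ↔ ∃ j, r1 j = p := by
    intro p
    have h1 : ¬ Rank2At σ p ↔ p ∈ s1 := by simp [s1, Finset.mem_filter]
    have h2 : p ∈ s1 ↔ p ∈ Set.range r1 := by
      rw [hr1def, Finset.range_orderEmbOfFin]; simp
    rw [h1, h2]; exact Iff.rfl
  set C : Set (Fin m × Fin n) := {x | r2 x.1 < r1 x.2 ∧ σ (r1 x.2) < σ (r2 x.1)} with hCdef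
  have hsup : SupClosed C := by
    rintro ⟨i, j⟩ ⟨h1, h2⟩ ⟨i', j'⟩ ⟨h3, h4⟩
    rw [Prod.mk_sup_mk]
    rcases le_total i i' with h | h <;> rcases le_total j j' with h' | h'
    · rw [sup_eq_right.2 h, sup_eq_right.2 h']; exact ⟨h3, h4⟩
    · rw [sup_eq_right.2 h, sup_eq_left.2 h']
      exact ⟨h3.trans_le (hr1sm.monotone h'), h2.trans_le (hr2v.monotone h)⟩
    · rw [sup_eq_left.2 h, sup_eq_right.2 h']
      exact ⟨h1.trans_le (hr1sm.monotone h'), h4.trans_le (hr2v.monotone h)⟩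
    · rw [sup_eq_left.2 h, sup_eq_left.2 h']; exact ⟨h1, h2⟩
  have hinf : InfClosed C := by
    rintro ⟨i, j⟩ ⟨h1, h2⟩ ⟨i', j'⟩ ⟨h3, h4⟩
    rw [Prod.mk_inf_mk]
    rcases le_total i i' with h | h <;> rcases le_total j j' with h' | h'
    · rw [inf_eq_left.2 h, inf_eq_left.2 h']; exact ⟨h1, h2⟩
    · rw [inf_eq_left.2 h, inf_eq_right.2 h']
      exact ⟨(hr2sm.monotone h).trans_lt h3, (hr1v.monotone h').trans_lt h2⟩
    · rw [inf_eq_right.2 h, inf_eq_left.2 h']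
      exact ⟨(hr2sm.monotone h).trans_lt h1, (hr1v.monotone h').trans_lt h4⟩
    · rw [inf_eq_right.2 h, inf_eq_right.2 h']; exact ⟨h3, h4⟩
  set K : Sublattice (Fin m × Fin n) := ⟨C, hsup, hinf⟩ with hKdef
  have hmemK : ∀ i j, ((i, j) ∈ K) ↔ (r2 i < r1 j ∧ σ (r1 j) < σ (r2 i)) :=
    fun i j => Iff.rfl
  have hKsub : IsSubdirect K := by
    constructor
    · intro i
      obtain ⟨q, hq, hv⟩ := hr2mem i
      have hq1 : ¬ Rank2At σ q := by
        rintro ⟨q', hq', hv'⟩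
        exact hav (dec3 hq hq' hv hv')
      obtain ⟨j, hj⟩ := (hr1range q).1 hq1
      exact ⟨j, (hmemK i j).2 ⟨by rw [hj]; exact hq, by rw [hj]; exact hv⟩⟩
    · intro j
      obtain ⟨q, hsm, hsa, i0, hi0⟩ := hrig (r1 j)
      have h01 : q 0 < q 1 := hsm (show (0 : Fin 2) < 1 by decide)
      have hv01 : σ (q 1) < σ (q 0) := hsa (show (0 : Fin 2) < 1 by decide)
      have hr1j : ¬ Rank2At σ (r1 j) := hr1mem j
      have hq1 : q 1 = r1 j := by
        fin_cases i0
        · exfalso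
          apply hr1j
          refine ⟨q 1, ?_, ?_⟩
          · rw [← hi0]; exact h01
          · rw [← hi0]; exact hv01
        · exact hi0
      have hp2 : Rank2At σ (q 0) := ⟨r1 j, by rw [← hq1]; exact h01, by rw [← hq1]; exact hv01⟩
      obtain ⟨i, hi⟩ := (hr2range (q 0)).1 hp2
      refine ⟨i, (hmemK i j).2 ⟨?_, ?_⟩⟩
      · rw [hi, ← hq1]; exact h01
      · rw [hi, ← hq1]; exact hv01
  refine ⟨K, ⟨hKsub, r2, r1, hr2v, hr1v, hr2range, hr1range, hmemK⟩, ?_⟩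
  rintro K' ⟨-, r2', r1', hv2', hv1', hrange2', hrange1', hmem'⟩
  have h2mem' : ∀ i, Rank2At σ (r2' i) := fun i => (hrange2' (r2' i)).2 ⟨i, rfl⟩
  have h1mem' : ∀ j, ¬ Rank2At σ (r1' j) := fun j => (hrange1' (r1' j)).2 ⟨j, rfl⟩
  have hsm2' : StrictMono r2' := by
    intro i i' h
    rcases lt_trichotomy (r2' i) (r2' i') with hh|hh|hh
    · exact hh
    · exfalso
      have hlt : σ (r2' i) < σ (r2' i') := hv2' h
      rw [hh] at hlt
      exact lt_irrefl _ hlt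
    · exact absurd (hv2' h) (not_lt.2 (rank2_mono hav (h2mem' i) hh).le)
  have hsm1' : StrictMono r1' := by
    intro j j' h
    rcases lt_trichotomy (r1' j) (r1' j') with hh|hh|hh
    · exact hh
    · exfalso
      have hlt : σ (r1' j) < σ (r1' j') := hv1' h
      rw [hh] at hlt
      exact lt_irrefl _ hlt
    · exact absurd (hv1' h) (not_lt.2 (rank1_mono (h1mem' j') hh).le)
  have hr2'eq : r2' = r2 := by
    rw [hr2def]
    exact Finset.orderEmbOfFin_unique hs2
      (fun x => by simp [s2, Finset.mem_filter]; exact h2mem' x) hsm2'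
  have hr1'eq : r1' = r1 := by
    rw [hr1def]
    exact Finset.orderEmbOfFin_unique hs1
      (fun x => by simp [s1, Finset.mem_filter]; exact h1mem' x) hsm1'
  apply Sublattice.ext
  rintro ⟨i, j⟩
  rw [hmem' i j, hr2'eq, hr1'eq]
  exact (hmemK i j).symm

lemma part2 {m n : ℕ} (K : Sublattice (Fin m × Fin n)) (hK : IsSubdirect K) :
    ∃! π : Σ N : ℕ, Equiv.Perm (Fin N),
      RigidWithRanks m n π ∧ IsOccurrenceLattice m n π K := by
  classical
  have hrowne : ∀ i : Fin m, (Finset.univ.filter fun j => (i, j) ∈ K).Nonempty := by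
    intro i; obtain ⟨p, hp⟩ := hK.1 i; exact ⟨p, by simp [hp]⟩
  set a : Fin m → Fin n := fun i => (Finset.univ.filter fun j => (i, j) ∈ K).min' (hrowne i)
    with hadef
  set b : Fin m → Fin n := fun i => (Finset.univ.filter fun j => (i, j) ∈ K).max' (hrowne i)
    with hbdef
  have haK : ∀ i, (i, a i) ∈ K := fun i => by
    have h := Finset.min'_mem _ (hrowne i)
    simpa using (Finset.mem_filter.1 h).2
  have hbK : ∀ i, (i, b i) ∈ K := fun i => by
    have h := Finset.max'_mem _ (hrowne i)
    simpa using (Finset.mem_filter.1 h).2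
  have hmem_ab : ∀ i j, (i, j) ∈ K → a i ≤ j ∧ j ≤ b i := by
    intro i j hij
    exact ⟨Finset.min'_le _ _ (by simp [hij]), Finset.le_max' _ _ (by simp [hij])⟩
  have hab : ∀ i, a i ≤ b i := fun i => (hmem_ab i (a i) (haK i)).2
  have hcover : ∀ j : Fin n, ∃ i, a i ≤ j ∧ j ≤ b i := by
    intro j; obtain ⟨i, hi⟩ := hK.2 j; exact ⟨i, hmem_ab i j hi⟩
  have hamono : Monotone a := by
    intro i i' h
    have hinf := K.infClosed' (haK i) (haK i')
    rw [Prod.mk_inf_mk, inf_eq_left.2 h] at hinf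
    have hmm : a i ⊓ a i' ∈ Finset.univ.filter fun j => (i, j) ∈ K := by
      simp only [Finset.mem_filter, Finset.mem_univ, true_and]
      exact hinf
    exact le_trans (Finset.min'_le _ _ hmm) inf_le_right
  have hbmono : Monotone b := by
    intro i i' h
    have hsup := K.supClosed' (hbK i) (hbK i')
    rw [Prod.mk_sup_mk, sup_eq_right.2 h] at hsup
    have hmm : b i ⊔ b i' ∈ Finset.univ.filter fun j => (i', j) ∈ K := by
      simp only [Finset.mem_filter, Finset.mem_univ, true_and]
      exact hsup
    exact le_trans le_sup_left (Finset.le_max' _ _ hmm)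
  have hstruct : ∀ i j, (i, j) ∈ K ↔ (a i ≤ j ∧ j ≤ b i) := by
    intro i j
    refine ⟨hmem_ab i j, fun h => ?_⟩
    obtain ⟨h1, h2⟩ := h
    obtain ⟨i'', hi''⟩ := hK.2 j
    rcases le_total i'' i with h | h
    · have hh := K.supClosed' hi'' (haK i)
      rw [Prod.mk_sup_mk, sup_eq_right.2 h, sup_eq_left.2 h1] at hh
      exact hh
    · have hh := K.infClosed' hi'' (hbK i)
      rw [Prod.mk_inf_mk, inf_eq_right.2 h, inf_eq_left.2 h2] at hh
      exact hh
  -- the riffled permutation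
  set c1 : Fin m → ℕ := fun i => (a i : ℕ) with hc1def
  set c2 : Fin m → ℕ := fun i => (b i : ℕ) + 1 with hc2def
  have hc1mono : Monotone c1 := fun i i' h => Fin.le_def.1 (hamono h)
  have hc2mono : Monotone c2 := fun i i' h =>
    Nat.add_le_add_right (Fin.le_def.1 (hbmono h)) 1
  have hc1n : ∀ i, c1 i ≤ n := fun i => (a i).isLt.le
  have hc2n : ∀ i, c2 i ≤ n := fun i => (b i).isLt
  set pos := riffle c1 hc1n with hposdef
  set val := riffle c2 hc2n with hvaldef
  have hposbij := riffle_bij hc1mono hc1n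
  have hvalbij := riffle_bij hc2mono hc2n
  have hposlt := riffle_lt_iff hc1mono hc1n
  have hvallt := riffle_lt_iff hc2mono hc2n
  set πc : Equiv.Perm (Fin (m + n)) :=
    (Equiv.ofBijective pos hposbij).symm.trans (Equiv.ofBijective val hvalbij) with hπdef
  have hπpos : ∀ x, πc (pos x) = val x := by
    intro x
    have h : (Equiv.ofBijective pos hposbij).symm (pos x) = x :=
      (Equiv.ofBijective pos hposbij).symm_apply_apply x
    show (Equiv.ofBijective val hvalbij) ((Equiv.ofBijective pos hposbij).symm (pos x)) = val x
    rw [h]; rfl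
  have hrank2 : ∀ i, Rank2At πc (pos (Sum.inl i)) := by
    intro i
    refine ⟨pos (Sum.inr (a i)), ?_, ?_⟩
    · exact (hposlt _ _).2 (le_refl (c1 i))
    · rw [hπpos, hπpos]
      exact (hvallt _ _).2 (show ((a i : ℕ)) < c2 i from Nat.lt_succ_of_le (Fin.le_def.1 (hab i)))
  have hrank1 : ∀ j, ¬ Rank2At πc (pos (Sum.inr j)) := by
    rintro j ⟨q, hq, hv⟩
    obtain ⟨x, rfl⟩ := hposbij.2 q
    rcases x with i | j'
    · have h1 : (j : ℕ) < c1 i := (hposlt _ _).1 hq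
      rw [hπpos, hπpos] at hv
      have h2 : c2 i ≤ (j : ℕ) := (hvallt _ _).1 hv
      have h3 := Fin.le_def.1 (hab i)
      have h1' : (j : ℕ) < (a i : ℕ) := h1
      have h2' : (b i : ℕ) + 1 ≤ (j : ℕ) := h2
      omega
    · have h1 : j < j' := (hposlt _ _).1 hq
      rw [hπpos, hπpos] at hv
      have h2 : j' < j := (hvallt _ _).1 hv
      exact absurd (h1.trans h2) (lt_irrefl _)
  have hshape : ∀ x y, pos x < pos y → πc (pos y) < πc (pos x) →
      ∃ i j, x = Sum.inl i ∧ y = Sum.inr j := by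
    intro x y hp hv
    rw [hπpos, hπpos] at hv
    rcases x with i | j <;> rcases y with i' | j'
    · exact absurd (((hposlt _ _).1 hp).trans ((hvallt _ _).1 hv)) (lt_irrefl _)
    · exact ⟨i, j', rfl, rfl⟩
    · exfalso
      have h1 : (j : ℕ) < c1 i' := (hposlt _ _).1 hp
      have h2 : c2 i' ≤ (j : ℕ) := (hvallt _ _).1 hv
      have h3 := Fin.le_def.1 (hab i')
      have h1' : (j : ℕ) < (a i' : ℕ) := h1
      have h2' : (b i' : ℕ) + 1 ≤ (j : ℕ) := h2
      omega
    · exact absurd (((hposlt _ _).1 hp).trans ((hvallt _ _).1 hv)) (lt_irrefl _)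
  have hav : ¬ HasDecSeq πc 3 := by
    rintro ⟨q, hsm, hsa⟩
    obtain ⟨x0, hx0⟩ := hposbij.2 (q 0)
    obtain ⟨x1, hx1⟩ := hposbij.2 (q 1)
    obtain ⟨x2, hx2⟩ := hposbij.2 (q 2)
    have hx0' : pos x0 = q 0 := hx0
    have hx1' : pos x1 = q 1 := hx1
    have hx2' : pos x2 = q 2 := hx2
    have h01 : pos x0 < pos x1 := by
      rw [hx0', hx1']; exact hsm (show (0 : Fin 3) < 1 by decide)
    have h12 : pos x1 < pos x2 := by
      rw [hx1', hx2']; exact hsm (show (1 : Fin 3) < 2 by decide)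
    have v01 : πc (pos x1) < πc (pos x0) := by
      rw [hx0', hx1']; exact hsa (show (0 : Fin 3) < 1 by decide)
    have v12 : πc (pos x2) < πc (pos x1) := by
      rw [hx1', hx2']; exact hsa (show (1 : Fin 3) < 2 by decide)
    obtain ⟨i, j, hxa, hxb⟩ := hshape x0 x1 h01 v01
    obtain ⟨i', j', hxc, hxd⟩ := hshape x1 x2 h12 v12
    rw [hxb] at hxc
    exact Sum.inr_ne_inl hxc
  have hrig : KRigid 2 πc := by
    intro p
    obtain ⟨x, rfl⟩ := hposbij.2 p
    rcases x with i | j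
    · refine ⟨![pos (Sum.inl i), pos (Sum.inr (a i))], sm2 ?_, sa2 ?_, 0, rfl⟩
      · show pos (Sum.inl i) < pos (Sum.inr (a i))
        exact (hposlt _ _).2 (le_refl (c1 i))
      · show πc (pos (Sum.inr (a i))) < πc (pos (Sum.inl i))
        rw [hπpos, hπpos]
        exact (hvallt _ _).2 (Nat.lt_succ_of_le (Fin.le_def.1 (hab i)))
    · obtain ⟨i, h1, h2⟩ := hcover j
      refine ⟨![pos (Sum.inl i), pos (Sum.inr j)], sm2 ?_, sa2 ?_, 1, rfl⟩
      · show pos (Sum.inl i) < pos (Sum.inr j)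
        exact (hposlt _ _).2 (show c1 i ≤ (j : ℕ) from Fin.le_def.1 h1)
      · show πc (pos (Sum.inr j)) < πc (pos (Sum.inl i))
        rw [hπpos, hπpos]
        exact (hvallt _ _).2 (show (j : ℕ) < c2 i from Nat.lt_succ_of_le (Fin.le_def.1 h2))
  have hcard2 : Nat.card {p : Fin (m + n) // Rank2At πc p} = m := by
    have e : Fin m ≃ {p : Fin (m + n) // Rank2At πc p} := by
      refine Equiv.ofBijective (fun i => ⟨pos (Sum.inl i), hrank2 i⟩) ⟨?_, ?_⟩
      · intro i i' h
        exact Sum.inl.inj (hposbij.1 (congrArg Subtype.val h))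
      · rintro ⟨p, hp⟩
        obtain ⟨x, rfl⟩ := hposbij.2 p
        rcases x with i | j
        · exact ⟨i, Subtype.ext rfl⟩
        · exact absurd hp (hrank1 j)
    calc Nat.card {p : Fin (m + n) // Rank2At πc p} = Nat.card (Fin m) :=
      Nat.card_congr e.symm
    _ = m := by simp
  have hcard1 : Nat.card {p : Fin (m + n) // ¬ Rank2At πc p} = n := by
    have e : Fin n ≃ {p : Fin (m + n) // ¬ Rank2At πc p} := by
      refine Equiv.ofBijective (fun j => ⟨pos (Sum.inr j), hrank1 j⟩) ⟨?_, ?_⟩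
      · intro j j' h
        exact Sum.inr.inj (hposbij.1 (congrArg Subtype.val h))
      · rintro ⟨p, hp⟩
        obtain ⟨x, rfl⟩ := hposbij.2 p
        rcases x with i | j
        · exact absurd (hrank2 i) hp
        · exact ⟨j, Subtype.ext rfl⟩
    calc Nat.card {p : Fin (m + n) // ¬ Rank2At πc p} = Nat.card (Fin n) :=
      Nat.card_congr e.symm
    _ = n := by simp
  have hocc : IsOccurrenceLattice m n ⟨m + n, πc⟩ K := by
    refine ⟨fun i => pos (Sum.inl i), fun j => pos (Sum.inr j), ?_, ?_, ?_, ?_, ?_⟩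
    · intro i i' h
      show πc (pos (Sum.inl i)) < πc (pos (Sum.inl i'))
      rw [hπpos, hπpos]
      exact (hvallt _ _).2 (show Rc c2 (Sum.inl i) (Sum.inl i') from h)
    · intro j j' h
      show πc (pos (Sum.inr j)) < πc (pos (Sum.inr j'))
      rw [hπpos, hπpos]
      exact (hvallt _ _).2 (show Rc c2 (Sum.inr j) (Sum.inr j') from h)
    · intro p
      constructor
      · intro hp
        obtain ⟨x, rfl⟩ := hposbij.2 p
        rcases x with i | j
        · exact ⟨i, rfl⟩
        · exact absurd hp (hrank1 j)
      · rintro ⟨i, rfl⟩; exact hrank2 i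
    · intro p
      constructor
      · intro hp
        obtain ⟨x, rfl⟩ := hposbij.2 p
        rcases x with i | j
        · exact absurd (hrank2 i) hp
        · exact ⟨j, rfl⟩
      · rintro ⟨j, rfl⟩; exact hrank1 j
    · intro i j
      rw [hstruct i j]
      constructor
      · rintro ⟨h1, h2⟩
        refine ⟨(hposlt _ _).2 (show c1 i ≤ (j : ℕ) from Fin.le_def.1 h1), ?_⟩
        show πc (pos (Sum.inr j)) < πc (pos (Sum.inl i))
        rw [hπpos, hπpos]
        exact (hvallt _ _).2 (show (j : ℕ) < c2 i from Nat.lt_succ_of_le (Fin.le_def.1 h2))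
      · rintro ⟨h1, h2⟩
        have ha : c1 i ≤ (j : ℕ) := (hposlt _ _).1 h1
        have hb : (j : ℕ) < c2 i := by
          have h2' : πc (pos (Sum.inr j)) < πc (pos (Sum.inl i)) := h2
          rw [hπpos, hπpos] at h2'
          exact (hvallt _ _).1 h2'
        have hb' : (j : ℕ) < (b i : ℕ) + 1 := hb
        exact ⟨Fin.le_def.2 ha, Fin.le_def.2 (Nat.lt_succ_iff.1 hb')⟩
  refine ⟨⟨m + n, πc⟩, ⟨⟨hav, hrig, hcard2, hcard1⟩, hocc⟩, ?_⟩
  rintro ⟨N', σ'⟩ ⟨⟨hav', hrig', hc2', hc1'⟩, hocc'⟩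
  have hc2'' : Nat.card {p : Fin N' // Rank2At σ' p} = m := hc2'
  have hc1'' : Nat.card {p : Fin N' // ¬ Rank2At σ' p} = n := hc1'
  have hN' : N' = m + n := by
    have h2 : Nat.card (Fin N') = m + n := by
      calc Nat.card (Fin N')
          = Nat.card ({p : Fin N' // Rank2At σ' p} ⊕ {p : Fin N' // ¬ Rank2At σ' p}) :=
        (Nat.card_congr (Equiv.sumCompl _)).symm
      _ = m + n := by rw [Nat.card_sum, hc2'', hc1'']
    simpa using h2
  subst hN'
  have hav2 : ¬ HasDecSeq σ' 3 := hav'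
  obtain ⟨r2', r1', hv2', hv1', hrange2', hrange1', hmem'⟩ := hocc'
  have hv2'' : StrictMono fun i => σ' (r2' i) := hv2'
  have hv1'' : StrictMono fun j => σ' (r1' j) := hv1'
  have hrange2'' : ∀ p, Rank2At σ' p ↔ ∃ i, r2' i = p := hrange2'
  have hrange1'' : ∀ p, ¬ Rank2At σ' p ↔ ∃ j, r1' j = p := hrange1'
  have hKmem : ∀ i j, (i, j) ∈ K ↔ (r2' i < r1' j ∧ σ' (r1' j) < σ' (r2' i)) := hmem'
  have h2mem' : ∀ i, Rank2At σ' (r2' i) := fun i => (hrange2'' (r2' i)).2 ⟨i, rfl⟩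
  have h1mem' : ∀ j, ¬ Rank2At σ' (r1' j) := fun j => (hrange1'' (r1' j)).2 ⟨j, rfl⟩
  have hne : ∀ i j, r2' i ≠ r1' j := fun i j h => (h1mem' j) (h ▸ h2mem' i)
  have hsm2' : StrictMono r2' := by
    intro i i' h
    rcases lt_trichotomy (r2' i) (r2' i') with hh|hh|hh
    · exact hh
    · exfalso
      have hlt : σ' (r2' i) < σ' (r2' i') := hv2'' h
      rw [hh] at hlt
      exact lt_irrefl _ hlt
    · exact absurd (hv2'' h) (not_lt.2 (rank2_mono hav2 (h2mem' i) hh).le)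
  have hsm1' : StrictMono r1' := by
    intro j j' h
    rcases lt_trichotomy (r1' j) (r1' j') with hh|hh|hh
    · exact hh
    · exfalso
      have hlt : σ' (r1' j) < σ' (r1' j') := hv1'' h
      rw [hh] at hlt
      exact lt_irrefl _ hlt
    · exact absurd (hv1'' h) (not_lt.2 (rank1_mono (h1mem' j') hh).le)
  have C1 : ∀ i j, a i ≤ j → r2' i < r1' j := by
    intro i j h
    by_cases hb : j ≤ b i
    · exact ((hKmem i j).1 ((hstruct i j).2 ⟨h, hb⟩)).1
    · push_neg at hb
      rcases lt_trichotomy (r2' i) (r1' j) with hh|hh|hh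
      · exact hh
      · exact absurd hh (hne i j)
      · exfalso
        obtain ⟨i'', hi''⟩ := hK.2 j
        obtain ⟨hp'', hv''⟩ := (hKmem i'' j).1 hi''
        have hbi'' : j ≤ b i'' := (hmem_ab i'' j hi'').2
        have hii : i < i'' := by
          by_contra hcon
          push_neg at hcon
          exact absurd (le_trans hbi'' (hbmono hcon)) (not_le.2 hb)
        exact absurd (hp''.trans hh) (not_lt.2 (hsm2' hii).le)
  have C2 : ∀ i j, j < a i → r1' j < r2' i := by
    intro i j h
    have hnotK : (i, j) ∉ K := fun hc => absurd (hmem_ab i j hc).1 (not_le.2 h)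
    rcases lt_trichotomy (r1' j) (r2' i) with hh|hh|hh
    · exact hh
    · exact absurd hh.symm (hne i j)
    · exfalso
      have hval : ¬ (σ' (r1' j) < σ' (r2' i)) := fun hv => hnotK ((hKmem i j).2 ⟨hh, hv⟩)
      have hval2 : σ' (r2' i) < σ' (r1' j) := by
        rcases lt_trichotomy (σ' (r2' i)) (σ' (r1' j)) with h1|h1|h1
        · exact h1
        · exact absurd (σ'.injective h1) (hne i j)
        · exact absurd h1 hval
      obtain ⟨i'', hi''⟩ := hK.2 j
      obtain ⟨hp'', hv''⟩ := (hKmem i'' j).1 hi''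
      have hai'' : a i'' ≤ j := (hmem_ab i'' j hi'').1
      have hii : i'' < i := by
        by_contra hcon
        push_neg at hcon
        exact absurd (le_trans (hamono hcon) hai'') (not_le.2 h)
      have hlast : σ' (r2' i'') < σ' (r2' i) := hv2'' hii
      exact absurd (hval2.trans (hv''.trans hlast)) (lt_irrefl _)
  have C3 : ∀ i j, j ≤ b i → σ' (r1' j) < σ' (r2' i) := by
    intro i j h
    by_cases ha : a i ≤ j
    · exact ((hKmem i j).1 ((hstruct i j).2 ⟨ha, h⟩)).2
    · push_neg at ha
      exact rank1_mono (h1mem' j) (C2 i j ha)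
  have C4 : ∀ i j, b i < j → σ' (r2' i) < σ' (r1' j) := by
    intro i j h
    have ha : a i ≤ j := le_trans (hab i) h.le
    have hp := C1 i j ha
    have hnotK : (i, j) ∉ K := fun hc => absurd (hmem_ab i j hc).2 (not_le.2 h)
    have hval : ¬ (σ' (r1' j) < σ' (r2' i)) := fun hv => hnotK ((hKmem i j).2 ⟨hp, hv⟩)
    rcases lt_trichotomy (σ' (r2' i)) (σ' (r1' j)) with h1|h1|h1
    · exact h1
    · exact absurd (σ'.injective h1) (hne i j)
    · exact absurd h1 hval
  set pos' : Fin m ⊕ Fin n → Fin (m + n) := Sum.elim r2' r1' with hpos'def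
  have hdir' : ∀ x y, Rc c1 x y → pos' x < pos' y := by
    rintro (i | j) (i' | j') h
    · exact hsm2' h
    · exact C1 i j' (Fin.le_def.2 h)
    · exact C2 i' j (Fin.lt_def.2 h)
    · exact hsm1' h
  have h'bij : Function.Bijective pos' := by
    rw [Fintype.bijective_iff_injective_and_card]
    exact ⟨inj_of_dir hdir' (Rc_tri c1), by simp⟩
  have hpos'eq : pos' = pos := eq_of_orderCompat h'bij hposbij
    (fun x y => (lt_iff_of_dir hdir' (Rc_tri c1) x y).trans (hposlt x y).symm)
  set val' : Fin m ⊕ Fin n → Fin (m + n) :=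
    Sum.elim (fun i => σ' (r2' i)) (fun j => σ' (r1' j)) with hval'def
  have hdirv' : ∀ x y, Rc c2 x y → val' x < val' y := by
    rintro (i | j) (i' | j') h
    · exact hv2'' h
    · refine C4 i j' (Fin.lt_def.2 ?_)
      have h' : (b i : ℕ) + 1 ≤ (j' : ℕ) := h
      omega
    · refine C3 i' j (Fin.le_def.2 ?_)
      have h' : (j : ℕ) < (b i' : ℕ) + 1 := h
      omega
    · exact hv1'' h
  have hv'bij : Function.Bijective val' := by
    rw [Fintype.bijective_iff_injective_and_card]
    exact ⟨inj_of_dir hdirv' (Rc_tri c2), by simp⟩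
  have hval'eq : val' = val := eq_of_orderCompat hv'bij hvalbij
    (fun x y => (lt_iff_of_dir hdirv' (Rc_tri c2) x y).trans (hvallt x y).symm)
  have hσ : σ' = πc := by
    apply Equiv.ext
    intro p
    obtain ⟨x, rfl⟩ := hposbij.2 p
    have h1 : σ' (pos x) = val' x := by
      rw [← hpos'eq]
      rcases x with i | j <;> rfl
    rw [h1, hval'eq, hπpos]
  rw [hσ]
end TwoRigidAux

/-- The 2-rigid permutations in `I₂` with `m` elements of rank 2 and `n` elements
of rank 1 are in one-to-one correspondence with the subdirect products of the
chains `[m]` and `[n]`, via `π ↦ L_π`. -/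
theorem twoRigid_equiv_subdirect_products (m n : ℕ) (hm : 0 < m) (hn : 0 < n) :
    (∀ π : Σ N : ℕ, Equiv.Perm (Fin N), RigidWithRanks m n π →
      ∃! K : Sublattice (Fin m × Fin n),
        IsSubdirect K ∧ IsOccurrenceLattice m n π K) ∧
    (∀ K : Sublattice (Fin m × Fin n), IsSubdirect K →
      ∃! π : Σ N : ℕ, Equiv.Perm (Fin N),
        RigidWithRanks m n π ∧ IsOccurrenceLattice m n π K) :=
  ⟨fun π hπ => TwoRigidAux.part1 π hπ, fun K hK => TwoRigidAux.part2 K hK⟩
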